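/- Let e ∈ ℝⁿ, λ > 0, and let {ψₖ} be a W-orthonormal basis with (Aψᵢ)·(Aψⱼ) = ρᵢδᵢⱼ, ρₖ ≥ 0. Define the energy norm |||v|||_λ² = λ‖v‖_W² + ‖Av‖². Then sup over nonzero v ∈ ℝⁿ of (e·Av)²/|||v|||_λ² is at most Σₖ₌₁ⁿ (λ + ρₖ)^{-1}(e·Aψₖ)². -/

import Mathlib

open Matrix

/-- With the energy norm `|||v|||_λ² = λ‖v‖_W² + ‖Av‖²`, the quotient
`(e·Av)²/|||v|||_λ²` is bounded over nonzero `v` by `Σₖ (λ+ρₖ)⁻¹ (e·Aψₖ)²`. -/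
theorem stmt4 (n : ℕ) (A W : Matrix (Fin n) (Fin n) ℝ) (hW : W.PosDef)
    (ρ : Fin n → ℝ) (ψ : Fin n → (Fin n → ℝ))
    (hρ : ∀ k, 0 ≤ ρ k)
    (heig : ∀ k, (Aᵀ * A).mulVec (ψ k) = ρ k • W.mulVec (ψ k))
    (horth : ∀ i j, ψ i ⬝ᵥ W.mulVec (ψ j) = if i = j then 1 else 0)
    (hAorth : ∀ i j, A.mulVec (ψ i) ⬝ᵥ A.mulVec (ψ j) = ρ i * (if i = j then 1 else 0))
    (hbasis : ∀ v : Fin n → ℝ, v = ∑ k, (ψ k ⬝ᵥ W.mulVec v) • ψ k)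
    (e : Fin n → ℝ) (lam : ℝ) (hlam : 0 < lam) :
    ∀ v : Fin n → ℝ, v ≠ 0 →
      (e ⬝ᵥ A.mulVec v) ^ 2 / (lam * (v ⬝ᵥ W.mulVec v) + A.mulVec v ⬝ᵥ A.mulVec v) ≤
        ∑ k, (lam + ρ k)⁻¹ * (e ⬝ᵥ A.mulVec (ψ k)) ^ 2 := by
  intro v hv
  set c : Fin n → ℝ := fun k => ψ k ⬝ᵥ W.mulVec v with hc
  set b : Fin n → ℝ := fun k => e ⬝ᵥ A.mulVec (ψ k) with hb
  have hpos : ∀ k, 0 < lam + ρ k := fun k => by nlinarith [hρ k]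
  have hvs : v = ∑ k, c k • ψ k := hbasis v
  have dsum : ∀ (u : Fin n → ℝ) (f : Fin n → Fin n → ℝ),
      u ⬝ᵥ (∑ k, f k) = ∑ k, u ⬝ᵥ f k := by
    intro u f
    simp only [dotProduct, Finset.sum_apply, Finset.mul_sum]
    exact Finset.sum_comm
  have dsum' : ∀ (u : Fin n → ℝ) (f : Fin n → Fin n → ℝ),
      (∑ k, f k) ⬝ᵥ u = ∑ k, f k ⬝ᵥ u := by
    intro u f
    rw [dotProduct_comm, dsum]
    exact Finset.sum_congr rfl fun k _ => dotProduct_comm _ _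
  have msum : ∀ (M : Matrix (Fin n) (Fin n) ℝ) (f : Fin n → Fin n → ℝ),
      M.mulVec (∑ k, f k) = ∑ k, M.mulVec (f k) := by
    intro M f
    simp only [← Matrix.mulVecLin_apply]
    exact map_sum (Matrix.mulVecLin M) f Finset.univ
  -- numerator
  have hnum : e ⬝ᵥ A.mulVec v = ∑ k, c k * b k := by
    conv_lhs => rw [hvs]
    rw [msum, dsum]
    simp [Matrix.mulVec_smul, smul_eq_mul, hb]
  -- W-norm
  have hWnorm : v ⬝ᵥ W.mulVec v = ∑ k, c k ^ 2 := by
    conv_lhs => rw [hvs]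
    rw [msum, dsum']
    simp only [dsum, Matrix.mulVec_smul, smul_dotProduct, dotProduct_smul, smul_eq_mul,
      horth, mul_ite, mul_one, mul_zero]
    simp [Finset.sum_ite_eq', sq]
  -- A-norm
  have hAnorm : A.mulVec v ⬝ᵥ A.mulVec v = ∑ k, ρ k * c k ^ 2 := by
    conv_lhs => rw [hvs]
    rw [msum A, dsum']
    simp only [dsum, Matrix.mulVec_smul, smul_dotProduct, dotProduct_smul, smul_eq_mul,
      hAorth, mul_ite, mul_one, mul_zero]
    refine Finset.sum_congr rfl fun i _ => ?_
    rw [Finset.sum_eq_single i]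
    · rw [if_pos rfl]; ring
    · intro j _ hji; simp [if_neg (Ne.symm hji)]
    · simp
  have hD : 0 < lam * (v ⬝ᵥ W.mulVec v) + A.mulVec v ⬝ᵥ A.mulVec v := by
    have h1 : 0 < v ⬝ᵥ W.mulVec v := by simpa using hW.dotProduct_mulVec_pos hv
    have h2 : 0 ≤ A.mulVec v ⬝ᵥ A.mulVec v := by
      rw [hAnorm]; exact Finset.sum_nonneg fun k _ => mul_nonneg (hρ k) (sq_nonneg _)
    nlinarith
  rw [div_le_iff₀ hD, hnum, hWnorm, hAnorm]
  have key : (∑ k, c k * b k) ^ 2 ≤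
      (∑ k, (lam + ρ k) * c k ^ 2) * ∑ k, (lam + ρ k)⁻¹ * b k ^ 2 := by
    have := Finset.sum_mul_sq_le_sq_mul_sq Finset.univ
      (fun k => Real.sqrt (lam + ρ k) * c k)
      (fun k => (Real.sqrt (lam + ρ k))⁻¹ * b k)
    have e1 : ∀ k : Fin n,
        (Real.sqrt (lam + ρ k) * c k) * ((Real.sqrt (lam + ρ k))⁻¹ * b k) = c k * b k := by
      intro k
      have : Real.sqrt (lam + ρ k) ≠ 0 := ne_of_gt (Real.sqrt_pos.mpr (hpos k))
      field_simp
    have e2 : ∀ k : Fin n, (Real.sqrt (lam + ρ k) * c k) ^ 2 = (lam + ρ k) * c k ^ 2 := by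
      intro k
      rw [mul_pow, Real.sq_sqrt (hpos k).le]
    have e3 : ∀ k : Fin n,
        ((Real.sqrt (lam + ρ k))⁻¹ * b k) ^ 2 = (lam + ρ k)⁻¹ * b k ^ 2 := by
      intro k
      rw [mul_pow, ← Real.sqrt_inv, Real.sq_sqrt (inv_nonneg.mpr (hpos k).le)]
    simpa only [e1, e2, e3] using this
  calc (∑ k, c k * b k) ^ 2
      ≤ (∑ k, (lam + ρ k) * c k ^ 2) * ∑ k, (lam + ρ k)⁻¹ * b k ^ 2 := key
    _ = (∑ k, (lam + ρ k)⁻¹ * b k ^ 2) * (lam * ∑ k, c k ^ 2 + ∑ k, ρ k * c k ^ 2) := by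
        rw [mul_comm]
        congr 1
        rw [Finset.mul_sum, ← Finset.sum_add_distrib]
        exact Finset.sum_congr rfl fun k _ => by ring
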